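/- Let 1/φ₋₂,₁(q,t) denote the inverse of φ₋₂,₁(q,t) in ℚ(q)[[t]]. For every d ≥ 0, the element of ℚ(q) given by the coefficient of t^d in 1/φ₋₂,₁(q,t) − q/(1+q)² (where q/(1+q)² is regarded as a constant power series in t) is regular at q = −1; that is, it can be written as a quotient of polynomials in q whose denominator does not vanish at q = −1. -/

import Mathlib

noncomputable section

open PowerSeries

/-- The field `ℚ(q)` of rational functions in `q`. -/
abbrev K : Type := RatFunc ℚ

/-- The variable `q ∈ ℚ(q)`. -/
def q : K := RatFunc.X

/-- `s = q + 2 + q⁻¹`. -/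
def s : K := q + 2 + q⁻¹

/-- The `m`-th factor of the infinite product defining `φ_{-2,1}`. -/
def phiFactor (m : ℕ) : PowerSeries K :=
  (1 + C q * X ^ m) ^ 2 * (1 + C q⁻¹ * X ^ m) ^ 2 * ((1 - X ^ m)⁻¹) ^ 4

/-- The infinite product `∏_{m ≥ 1} (1 + q tᵐ)² (1 + q⁻¹ tᵐ)² (1 - tᵐ)⁻⁴`, convergent in the
`t`-adic topology: the coefficient of `t^d` equals that of any partial product
`∏_{m=1}^{N}` with `N ≥ d`, since the `m`-th factor is `≡ 1 mod t^m`. -/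
def phiProd : PowerSeries K :=
  PowerSeries.mk fun d => coeff d (∏ m ∈ Finset.Icc 1 d, phiFactor m)

/-- The weak Jacobi form `φ_{-2,1}(q,t)` of weight `-2` and index `1`. -/
def phi : PowerSeries K := C s * phiProd

/-- The Weierstraß elliptic function expansion
`℘(q,t) = -1/12 + q/(1+q)² - ∑_{d≥1} (∑_{m|d} m((-q)^m - 2 + (-q)^{-m})) t^d`. -/
def wp : PowerSeries K :=
  PowerSeries.mk fun d =>
    if d = 0 then -(1 / 12) + q / (1 + q) ^ 2
    else -∑ m ∈ d.divisors, (m : K) * ((-q) ^ (m : ℤ) - 2 + (-q) ^ (-(m : ℤ)))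

/-- The weak Jacobi form `φ_{0,1}(q,t) = 12 ℘(q,t) φ_{-2,1}(q,t)` of weight `0` and index `1`. -/
def phi01 : PowerSeries K := 12 * wp * phi



namespace Statement7Aux

/-- Rational functions regular at `q = -1`. -/
def Sreg : Subring K where
  carrier := {f | ∃ a b : Polynomial ℚ, Polynomial.eval (-1 : ℚ) b ≠ 0 ∧
    f = algebraMap (Polynomial ℚ) K a / algebraMap (Polynomial ℚ) K b}
  zero_mem' := ⟨0, 1, by simp, by simp⟩
  one_mem' := ⟨1, 1, by simp, by simp⟩
  add_mem' := by
    rintro f g ⟨a, b, hb, rfl⟩ ⟨c, d, hd, rfl⟩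
    have hb0 : algebraMap (Polynomial ℚ) K b ≠ 0 :=
      RatFunc.algebraMap_ne_zero (fun h => hb (by simp [h]))
    have hd0 : algebraMap (Polynomial ℚ) K d ≠ 0 :=
      RatFunc.algebraMap_ne_zero (fun h => hd (by simp [h]))
    exact ⟨a * d + b * c, b * d, by simp [hb, hd],
      by rw [div_add_div _ _ hb0 hd0, map_add, map_mul, map_mul, map_mul]⟩
  neg_mem' := by
    rintro f ⟨a, b, hb, rfl⟩
    exact ⟨-a, b, hb, by rw [map_neg, neg_div]⟩
  mul_mem' := by
    rintro f g ⟨a, b, hb, rfl⟩ ⟨c, d, hd, rfl⟩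
    exact ⟨a * c, b * d, by simp [hb, hd], by rw [div_mul_div_comm, map_mul, map_mul]⟩

lemma q_mem : q ∈ Sreg :=
  ⟨Polynomial.X, 1, by simp, by simp [q, RatFunc.algebraMap_X]⟩

lemma q_inv_mem : q⁻¹ ∈ Sreg :=
  ⟨1, Polynomial.X, by simp, by rw [map_one, RatFunc.algebraMap_X, one_div, q]⟩

lemma s_mem : s ∈ Sreg := by
  have h2 : (2 : K) ∈ Sreg := by
    have := add_mem Sreg.one_mem Sreg.one_mem
    rwa [one_add_one_eq_two] at this
  exact add_mem (add_mem q_mem h2) q_inv_mem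

/-- Power series all of whose coefficients are regular at `q = -1`. -/
def Treg : Subring (PowerSeries K) where
  carrier := {f | ∀ n, coeff n f ∈ Sreg}
  zero_mem' := fun n => by simp [Sreg.zero_mem]
  one_mem' := fun n => by
    rw [PowerSeries.coeff_one]
    split_ifs
    exacts [Sreg.one_mem, Sreg.zero_mem]
  add_mem' := fun hf hg n => by rw [map_add]; exact add_mem (hf n) (hg n)
  neg_mem' := fun hf n => by rw [map_neg]; exact neg_mem (hf n)
  mul_mem' := fun hf hg n => by
    rw [PowerSeries.coeff_mul]
    exact sum_mem fun p _ => mul_mem (hf _) (hg _)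

lemma X_mem : (X : PowerSeries K) ∈ Treg := fun n => by
  rw [PowerSeries.coeff_X]
  split_ifs
  exacts [Sreg.one_mem, Sreg.zero_mem]

lemma C_mem {x : K} (hx : x ∈ Sreg) : C x ∈ Treg := fun n => by
  rw [PowerSeries.coeff_C]
  split_ifs
  exacts [hx, Sreg.zero_mem]

lemma inv_mem {f : PowerSeries K} (hf : f ∈ Treg)
    (h0 : (constantCoeff f)⁻¹ ∈ Sreg) : f⁻¹ ∈ Treg := by
  intro n
  induction n using Nat.strong_induction_on with
  | _ n ih =>
    rw [PowerSeries.coeff_inv]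
    split_ifs
    · exact h0
    · refine mul_mem (neg_mem h0) (sum_mem fun p _ => ?_)
      split_ifs with h
      · exact mul_mem (hf _) (ih _ h)
      · exact Sreg.zero_mem

lemma hq0 : q ≠ 0 := RatFunc.X_ne_zero

lemma h1q : (1 : K) + q ≠ 0 := by
  have h' : ((1 : Polynomial ℚ) + Polynomial.X) ≠ 0 := by
    intro h
    have := congrArg (Polynomial.eval 0) h
    simp at this
  have h := RatFunc.algebraMap_ne_zero (K := ℚ) h'
  rwa [map_add, map_one, RatFunc.algebraMap_X, ← q] at h

lemma hs0 : s ≠ 0 := by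
  intro h
  have hsq : s * q = (1 + q) ^ 2 := by
    rw [s]; field_simp; linear_combination mul_inv_cancel₀ hq0
  rw [h, zero_mul] at hsq
  exact pow_ne_zero 2 h1q hsq.symm

lemma hpolar : q / (1 + q) ^ 2 = s⁻¹ := by
  rw [eq_comm, inv_eq_iff_eq_inv, eq_comm, inv_div, s]
  rw [div_eq_iff hq0]
  field_simp
  linear_combination -mul_inv_cancel₀ hq0

lemma hCqq : C q * C q⁻¹ = 1 := by
  rw [← map_mul, mul_inv_cancel₀ hq0, map_one]

lemma hCadd : C q + C q⁻¹ = C s - 2 := by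
  rw [s, map_add, map_add]
  have h2 : (C 2 : PowerSeries K) = 2 := by rw [map_ofNat]
  rw [h2]; ring

lemma claimA (m : ℕ) :
    (1 + C q * X ^ m) * (1 + C q⁻¹ * X ^ m) =
      (1 - X ^ m) ^ 2 + C s * X ^ m := by
  linear_combination (X : PowerSeries K) ^ m * hCadd +
    (X : PowerSeries K) ^ m * (X : PowerSeries K) ^ m * hCqq

lemma constCoeff_one_sub_X_pow {m : ℕ} (hm : 1 ≤ m) :
    constantCoeff (1 - X ^ m : PowerSeries K) = 1 := by
  rw [map_sub, map_one, map_pow, constantCoeff_X, zero_pow (by omega), sub_zero]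

lemma one_sub_X_pow_inv_mem {m : ℕ} (hm : 1 ≤ m) :
    ((1 - X ^ m : PowerSeries K))⁻¹ ∈ Treg := by
  refine inv_mem (sub_mem Treg.one_mem (pow_mem X_mem m)) ?_
  rw [constCoeff_one_sub_X_pow hm, inv_one]
  exact Sreg.one_mem

lemma phiFactor_eq {m : ℕ} (hm : 1 ≤ m) :
    phiFactor m = (1 + C s * (X ^ m * ((1 - X ^ m)⁻¹) ^ 2)) ^ 2 := by
  have hu : (1 - X ^ m : PowerSeries K) * (1 - X ^ m)⁻¹ = 1 :=
    PowerSeries.mul_inv_cancel _ (by rw [constCoeff_one_sub_X_pow hm]; exact one_ne_zero)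
  have step2 : phiFactor m = ((1 - X ^ m) ^ 2 + C s * X ^ m) ^ 2 * ((1 - X ^ m)⁻¹) ^ 4 := by
    rw [phiFactor]
    calc (1 + C q * X ^ m) ^ 2 * (1 + C q⁻¹ * X ^ m) ^ 2 * ((1 - X ^ m)⁻¹) ^ 4
        = ((1 + C q * X ^ m) * (1 + C q⁻¹ * X ^ m)) ^ 2 * ((1 - X ^ m)⁻¹) ^ 4 := by ring
      _ = ((1 - X ^ m) ^ 2 + C s * X ^ m) ^ 2 * ((1 - X ^ m)⁻¹) ^ 4 := by rw [claimA]
  rw [step2]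
  linear_combination (((1 - X ^ m) * (1 - X ^ m)⁻¹ + 1) *
    (((1 - X ^ m) ^ 2 + C s * X ^ m) * ((1 - X ^ m)⁻¹) ^ 2 + 1 +
      C s * X ^ m * ((1 - X ^ m)⁻¹) ^ 2)) * hu

lemma phiFactor_mem {m : ℕ} (hm : 1 ≤ m) : phiFactor m ∈ Treg := by
  rw [phiFactor_eq hm]
  exact pow_mem (add_mem Treg.one_mem (mul_mem (C_mem s_mem)
    (mul_mem (pow_mem X_mem m) (pow_mem (one_sub_X_pow_inv_mem hm) 2)))) 2

/-- Coefficient-wise divisibility by `s` within `Sreg`. -/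
def Jmem (f : PowerSeries K) : Prop := ∀ n, ∃ x ∈ Sreg, coeff n f = s * x

lemma Jmem_zero : Jmem 0 := fun n => ⟨0, Sreg.zero_mem, by simp⟩

lemma Jmem_add {f g : PowerSeries K} (hf : Jmem f) (hg : Jmem g) : Jmem (f + g) := by
  intro n
  obtain ⟨x, hx, hfx⟩ := hf n
  obtain ⟨y, hy, hgy⟩ := hg n
  exact ⟨x + y, add_mem hx hy, by rw [map_add, hfx, hgy, mul_add]⟩

lemma Jmem_neg {f : PowerSeries K} (hf : Jmem f) : Jmem (-f) := by
  intro n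
  obtain ⟨x, hx, hfx⟩ := hf n
  exact ⟨-x, neg_mem hx, by rw [map_neg, hfx, mul_neg]⟩

lemma Jmem_mul_left {f g : PowerSeries K} (hg : g ∈ Treg) (hf : Jmem f) : Jmem (g * f) := by
  intro n
  choose x hx hfx using hf
  refine ⟨∑ p ∈ Finset.HasAntidiagonal.antidiagonal n, coeff p.1 g * x p.2,
    sum_mem fun p _ => mul_mem (hg _) (hx _), ?_⟩
  rw [PowerSeries.coeff_mul, Finset.mul_sum]
  exact Finset.sum_congr rfl fun p _ => by rw [hfx p.2]; ring

lemma Jmem_mul_right {f g : PowerSeries K} (hf : Jmem f) (hg : g ∈ Treg) : Jmem (f * g) := by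
  rw [mul_comm]; exact Jmem_mul_left hg hf

lemma Jmem_C_s_mul {g : PowerSeries K} (hg : g ∈ Treg) : Jmem (C s * g) := by
  intro n
  exact ⟨coeff n g, hg n, by rw [PowerSeries.coeff_C_mul]⟩

lemma Jmem_phiFactor_sub_one {m : ℕ} (hm : 1 ≤ m) : Jmem (phiFactor m - 1) := by
  set v : PowerSeries K := X ^ m * ((1 - X ^ m)⁻¹) ^ 2 with hv
  have hvmem : v ∈ Treg :=
    mul_mem (pow_mem X_mem m) (pow_mem (one_sub_X_pow_inv_mem hm) 2)
  have : phiFactor m - 1 = C s * (v * (C s * v + 2)) := by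
    rw [phiFactor_eq hm]; ring
  rw [this]
  exact Jmem_C_s_mul (mul_mem hvmem (add_mem (mul_mem (C_mem s_mem) hvmem)
    (by have := add_mem Treg.one_mem Treg.one_mem; rwa [one_add_one_eq_two] at this)))

lemma prod_phiFactor (F : Finset ℕ) (hF : ∀ m ∈ F, 1 ≤ m) :
    (∏ m ∈ F, phiFactor m) ∈ Treg ∧ Jmem ((∏ m ∈ F, phiFactor m) - 1) := by
  classical
  induction F using Finset.induction_on with
  | empty => rw [Finset.prod_empty, sub_self]; exact ⟨Treg.one_mem, Jmem_zero⟩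
  | @insert a F ha ih =>
    have haF : 1 ≤ a := hF a (Finset.mem_insert_self a F)
    have hF' : ∀ m ∈ F, 1 ≤ m := fun m hm => hF m (Finset.mem_insert_of_mem hm)
    obtain ⟨hP, hJ⟩ := ih hF'
    rw [Finset.prod_insert ha]
    refine ⟨mul_mem (phiFactor_mem haF) hP, ?_⟩
    have key : phiFactor a * (∏ m ∈ F, phiFactor m) - 1 =
        (phiFactor a - 1) * (∏ m ∈ F, phiFactor m) + ((∏ m ∈ F, phiFactor m) - 1) := by
      ring
    rw [key]
    exact Jmem_add (Jmem_mul_right (Jmem_phiFactor_sub_one haF) hP) hJ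

lemma phiProd_mem : phiProd ∈ Treg := by
  intro n
  rw [phiProd, PowerSeries.coeff_mk]
  exact (prod_phiFactor _ fun m hm => (Finset.mem_Icc.mp hm).1).1 n

lemma constCoeff_phiProd : constantCoeff phiProd = 1 := by
  rw [← PowerSeries.coeff_zero_eq_constantCoeff_apply, phiProd, PowerSeries.coeff_mk]
  rw [Finset.Icc_eq_empty (by omega), Finset.prod_empty, PowerSeries.coeff_zero_eq_constantCoeff_apply, map_one]

lemma phiProd_inv_mem : phiProd⁻¹ ∈ Treg := by
  refine inv_mem phiProd_mem ?_
  rw [constCoeff_phiProd, inv_one]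
  exact Sreg.one_mem

lemma Jmem_one_sub_phiProd : Jmem (1 - phiProd) := by
  intro n
  obtain ⟨x, hx, hco⟩ := (prod_phiFactor (Finset.Icc 1 n) fun m hm => (Finset.mem_Icc.mp hm).1).2 n
  refine ⟨-x, neg_mem hx, ?_⟩
  have : coeff n phiProd = coeff n (∏ m ∈ Finset.Icc 1 n, phiFactor m) := by
    rw [phiProd, PowerSeries.coeff_mk]
  rw [map_sub, this, mul_neg, ← hco, map_sub]
  ring

lemma Jmem_phiProd_inv_sub_one : Jmem (phiProd⁻¹ - 1) := by
  have heq : phiProd⁻¹ - 1 = phiProd⁻¹ * (1 - phiProd) := by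
    rw [mul_sub, mul_one, PowerSeries.inv_mul_cancel _ (by rw [constCoeff_phiProd]; exact one_ne_zero)]
  rw [heq]
  exact Jmem_mul_left phiProd_inv_mem Jmem_one_sub_phiProd

lemma phi_inv_eq : phi⁻¹ = C s⁻¹ * phiProd⁻¹ := by
  rw [phi, PowerSeries.mul_inv_rev, PowerSeries.C_inv, mul_comm]

end Statement7Aux

/-- Every `t`-coefficient of `1/φ_{-2,1}(q,t) - q/(1+q)²` is a rational
function which is regular at `q = -1`: it can be written as a quotient of polynomials whose
denominator does not vanish at `-1`. -/
theorem inv_phi_sub_polar_part_regular_at_minus_one :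
    ∀ d : ℕ, ∃ a b : Polynomial ℚ,
      Polynomial.eval (-1 : ℚ) b ≠ 0 ∧
      coeff d (phi⁻¹ - C (q / (1 + q) ^ 2)) =
        algebraMap (Polynomial ℚ) K a / algebraMap (Polynomial ℚ) K b := by
  intro d
  have key : coeff d (phi⁻¹ - C (q / (1 + q) ^ 2)) ∈ Statement7Aux.Sreg := by
    rw [Statement7Aux.hpolar, Statement7Aux.phi_inv_eq]
    have h2 : C s⁻¹ * phiProd⁻¹ - C s⁻¹ = C s⁻¹ * (phiProd⁻¹ - 1) := by ring
    rw [h2, PowerSeries.coeff_C_mul]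
    obtain ⟨x, hx, hco⟩ := Statement7Aux.Jmem_phiProd_inv_sub_one d
    rw [hco, ← mul_assoc, inv_mul_cancel₀ Statement7Aux.hs0, one_mul]
    exact hx
  obtain ⟨a, b, hb, hab⟩ := key
  exact ⟨a, b, hb, hab⟩


end
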